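/- Let R be a commutative ring with unity having some non-trivial idempotent, with U''(R) = ∅ and such that Cl₂(R) is not a complete graph. Then the strong resolving graph of Cl₂(R) is the disjoint union of the complete graph on the vertex set {(1,u) : u ∈ U(R)} (a copy of K_{|U(R)|}) and the graph K, where K has vertex set {(e,u) : e a non-trivial idempotent of R, u ∈ U(R)} and two vertices (e,u), (f,v) of K are adjacent if and only if ef ≠ 0 and uv ≠ 1. -/

import Mathlib

variable {V : Type*}

/-- In a graph `G`, `u` is maximally distant from `v` if `d(v,w) ≤ d(u,v)` for every
neighbour `w` of `u`. -/
def IsMaxDistFrom (G : SimpleGraph V) (u v : V) : Prop :=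
  ∀ w ∈ G.neighborSet u, G.dist v w ≤ G.dist u v

/-- `u` and `v` are mutually maximally distant in `G`. -/
def IsMMD (G : SimpleGraph V) (u v : V) : Prop :=
  IsMaxDistFrom G u v ∧ IsMaxDistFrom G v u

/-- The boundary of a graph: the set of vertices that are mutually maximally distant
from some other vertex.  This is the vertex set of the strong resolving graph. -/
def graphBoundary (G : SimpleGraph V) : Set V :=
  {u | ∃ v, u ≠ v ∧ IsMMD G u v}

/-- The strong resolving graph, realised on the full vertex set (vertices outside the
boundary are isolated): two distinct vertices are adjacent iff they are mutually
maximally distant. -/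
def srGraph (G : SimpleGraph V) : SimpleGraph V where
  Adj u v := u ≠ v ∧ IsMMD G u v
  symm := ⟨fun u v h => ⟨h.1.symm, h.2.2, h.2.1⟩⟩
  loopless := ⟨fun u h => h.1 rfl⟩

/-- The independence number of a graph: the largest cardinality of a finite set of
pairwise non-adjacent vertices. -/
noncomputable def indNum (G : SimpleGraph V) : ℕ :=
  sSup {n | ∃ s : Finset V, ((s : Set V).Pairwise fun a b => ¬ G.Adj a b) ∧ s.card = n}

/-- `S` is a strong resolving set of `G`: every pair of distinct vertices `u, v` is
strongly resolved by some `w ∈ S`, i.e. `v` lies on a shortest `u`-`w` path or `u` lies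
on a shortest `v`-`w` path. -/
def IsStrongResolvingSet (G : SimpleGraph V) (S : Set V) : Prop :=
  ∀ u v : V, u ≠ v → ∃ w ∈ S,
    G.dist u w = G.dist u v + G.dist v w ∨ G.dist v w = G.dist v u + G.dist u w

/-- The strong metric dimension of a graph: the smallest cardinality of a (finite)
strong resolving set. -/
noncomputable def sdim (G : SimpleGraph V) : ℕ :=
  sInf {n | ∃ S : Finset V, IsStrongResolvingSet G (S : Set V) ∧ S.card = n}

/-- Vertices of the clean graph: pairs `(e, u)` with `e` an idempotent and `u` a unit. -/
abbrev CleanVtx (R : Type*) [CommRing R] : Type _ := {e : R // IsIdempotentElem e} × Rˣ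

/-- The clean graph `Cl(R)` of a commutative ring `R`: distinct vertices `(e,u)`, `(f,v)`
are adjacent iff `e * f = 0` or `u * v = 1`. -/
def cleanGraph (R : Type*) [CommRing R] : SimpleGraph (CleanVtx R) where
  Adj x y := x ≠ y ∧ ((x.1 : R) * (y.1 : R) = 0 ∨ (x.2 : R) * (y.2 : R) = 1)
  symm := by
    refine ⟨?_⟩
    rintro x y ⟨hxy, h | h⟩
    · exact ⟨hxy.symm, Or.inl (by rwa [mul_comm])⟩
    · exact ⟨hxy.symm, Or.inr (by rwa [mul_comm])⟩
  loopless := ⟨fun x h => h.1 rfl⟩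

/-- The vertex set of `Cl₂(R)`: clean vertices `(e,u)` with `e ≠ 0`. -/
def clean2Set (R : Type*) [CommRing R] : Set (CleanVtx R) := {x | (x.1 : R) ≠ 0}

/-- `Cl₂(R)`, the subgraph of `Cl(R)` induced on the vertices `(e,u)` with `e ≠ 0`. -/
def clean2Graph (R : Type*) [CommRing R] : SimpleGraph (clean2Set R) :=
  SimpleGraph.induce (clean2Set R) (cleanGraph R)

/-- `U''(R)`: the set of units `u` with `u² ≠ 1`. -/
def uSecond (R : Type*) [CommRing R] : Set Rˣ := {u | (u : R) * (u : R) ≠ 1}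

/-- `|Id(R)*|`: the number of non-trivial idempotents of `R`. -/
noncomputable def idStarNum (R : Type*) [CommRing R] : ℕ :=
  {e : R | IsIdempotentElem e ∧ e ≠ 0 ∧ e ≠ 1}.ncard

/-- `|Id⊥(R)*|`: the maximum cardinality of a set of nonzero pairwise orthogonal
idempotents of `R`. -/
noncomputable def orthIdemNum (R : Type*) [CommRing R] : ℕ :=
  sSup {n | ∃ s : Finset R, (∀ e ∈ s, IsIdempotentElem e ∧ e ≠ 0) ∧
    ((s : Set R).Pairwise fun e f => e * f = 0) ∧ s.card = n}

namespace Cl2Aux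
variable {R : Type*} [CommRing R]

def Ee (x : clean2Set R) : R := (x.1.1 : R)
def Uu (x : clean2Set R) : Rˣ := x.1.2

lemma Ee_idem (x : clean2Set R) : IsIdempotentElem (Ee x) := x.1.1.2
lemma Ee_ne_zero (x : clean2Set R) : Ee x ≠ 0 := x.2

def vmk (g : R) (hg : IsIdempotentElem g) (h0 : g ≠ 0) (u : Rˣ) : clean2Set R :=
  ⟨(⟨g, hg⟩, u), h0⟩

@[simp] lemma Ee_vmk (g hg h0 u) : Ee (vmk (R := R) g hg h0 u) = g := rfl
@[simp] lemma Uu_vmk (g hg h0 u) : Uu (vmk (R := R) g hg h0 u) = u := rfl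

lemma vext_iff {x y : clean2Set R} : x = y ↔ Ee x = Ee y ∧ Uu x = Uu y := by
  constructor
  · rintro rfl; exact ⟨rfl, rfl⟩
  · rintro ⟨h1, h2⟩
    exact Subtype.ext (Prod.ext (Subtype.ext h1) h2)

lemma unit_sq (hU'' : uSecond R = ∅) (u : Rˣ) : (u : R) * u = 1 := by
  by_contra h
  have : u ∈ uSecond R := h
  rw [hU''] at this
  exact this

lemma unit_mul_eq_one (hU : ∀ u : Rˣ, (u : R) * u = 1) {u v : Rˣ} :
    (u : R) * v = 1 ↔ u = v := by
  constructor
  · intro h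
    have h2 : (u : R) * v = (u : R) * u := by rw [h, hU u]
    exact (Units.ext ((Units.mul_right_inj u).mp h2)).symm
  · rintro rfl; exact hU u

lemma adj_iff (hU : ∀ u : Rˣ, (u : R) * u = 1) {x y : clean2Set R} :
    (clean2Graph R).Adj x y ↔ x ≠ y ∧ (Ee x * Ee y = 0 ∨ Uu x = Uu y) := by
  have h0 : (clean2Graph R).Adj x y ↔
      (x.1 ≠ y.1 ∧ (Ee x * Ee y = 0 ∨ (Uu x : R) * Uu y = 1)) := Iff.rfl
  rw [h0, unit_mul_eq_one hU]
  constructor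
  · rintro ⟨h1, h2⟩; exact ⟨fun h => h1 (congrArg Subtype.val h), h2⟩
  · rintro ⟨h1, h2⟩; exact ⟨fun h => h1 (Subtype.ext h), h2⟩

open Classical in
noncomputable def Dd (x y : clean2Set R) : ℕ :=
  if x = y then 0
  else if Uu x = Uu y ∨ Ee x * Ee y = 0 then 1
  else if Ee x = 1 ∧ Ee y = 1 then 3
  else 2


lemma Dd_eq_one {x y : clean2Set R} (h0 : x ≠ y)
    (h1 : Uu x = Uu y ∨ Ee x * Ee y = 0) : Dd x y = 1 := by
  unfold Dd; rw [if_neg h0, if_pos h1]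

lemma ne_of_unit_ne {x y : clean2Set R} (h : Uu x ≠ Uu y) : x ≠ y :=
  fun he => h (by rw [he])

lemma Dd_eq_two {x y : clean2Set R} (h0 : Uu x ≠ Uu y) (h1 : Ee x * Ee y ≠ 0)
    (h2 : ¬(Ee x = 1 ∧ Ee y = 1)) : Dd x y = 2 := by
  unfold Dd
  rw [if_neg (ne_of_unit_ne h0), if_neg (not_or.mpr ⟨h0, h1⟩), if_neg h2]

lemma Dd_eq_three {x y : clean2Set R} (hne : (1 : R) ≠ 0) (h0 : Uu x ≠ Uu y)
    (hx : Ee x = 1) (hy : Ee y = 1) : Dd x y = 3 := by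
  unfold Dd
  rw [if_neg (ne_of_unit_ne h0),
    if_neg (not_or.mpr ⟨h0, by rw [hx, hy, mul_one]; exact hne⟩),
    if_pos ⟨hx, hy⟩]

lemma Dd_le_two_left {x y : clean2Set R} (h : Ee x ≠ 1) : Dd x y ≤ 2 := by
  unfold Dd; split_ifs with a b c
  · omega
  · omega
  · exact absurd c.1 h
  · omega

lemma Dd_le_two_right {x y : clean2Set R} (h : Ee y ≠ 1) : Dd x y ≤ 2 := by
  unfold Dd; split_ifs with a b c
  · omega
  · omega
  · exact absurd c.2 h
  · omega

lemma one_sub_ne_zero {a : R} (h : a ≠ 1) : (1 : R) - a ≠ 0 :=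
  fun hh => h (sub_eq_zero.mp hh).symm

lemma dist_eq (hU : ∀ u : Rˣ, (u : R) * u = 1)
    (hid : ∃ e : R, IsIdempotentElem e ∧ e ≠ 0 ∧ e ≠ 1)
    (x y : clean2Set R) :
    (clean2Graph R).dist x y = Dd x y := by
  classical
  by_cases hxy : x = y
  · subst hxy; simp [Dd]
  by_cases h1 : Uu x = Uu y ∨ Ee x * Ee y = 0
  · rw [Dd_eq_one hxy h1]
    exact SimpleGraph.dist_eq_one_iff_adj.mpr ((adj_iff hU).mpr ⟨hxy, h1.symm⟩)
  push_neg at h1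
  obtain ⟨hu, hp⟩ := h1
  have hnadj : ¬ (clean2Graph R).Adj x y := fun h => by
    rcases ((adj_iff hU).mp h).2 with h' | h'
    exacts [hp h', hu h']
  have hd1 : (clean2Graph R).dist x y ≠ 1 :=
    fun h => hnadj (SimpleGraph.dist_eq_one_iff_adj.mp h)
  by_cases h2 : Ee x = 1 ∧ Ee y = 1
  · -- distance 3
    obtain ⟨g, hg, hg0, hg1⟩ := hid
    have h1g0 : (1 : R) - g ≠ 0 := one_sub_ne_zero hg1
    have a1 : (clean2Graph R).Adj x (vmk g hg hg0 (Uu x)) := by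
      refine (adj_iff hU).mpr ⟨fun h => hg1 ?_, Or.inr rfl⟩
      have := (vext_iff.mp h).1
      rw [Ee_vmk] at this; rw [← this, h2.1]
    have a2 : (clean2Graph R).Adj (vmk g hg hg0 (Uu x)) (vmk (1 - g) hg.one_sub h1g0 (Uu y)) := by
      refine (adj_iff hU).mpr ⟨ne_of_unit_ne hu, Or.inl ?_⟩
      simp only [Ee_vmk]
      rw [mul_sub, mul_one, hg, sub_self]
    have a3 : (clean2Graph R).Adj (vmk (1 - g) hg.one_sub h1g0 (Uu y)) y := by
      refine (adj_iff hU).mpr ⟨fun h => ?_, Or.inr rfl⟩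
      have := (vext_iff.mp h).1
      rw [Ee_vmk, h2.2] at this
      exact hg0 (by linear_combination -this)
    have hle : (clean2Graph R).dist x y ≤ 3 := by
      simpa using SimpleGraph.dist_le
        (SimpleGraph.Walk.cons a1 (SimpleGraph.Walk.cons a2 (SimpleGraph.Walk.cons a3 SimpleGraph.Walk.nil)))
    have hd0 : (clean2Graph R).dist x y ≠ 0 :=
      SimpleGraph.dist_ne_zero_iff_ne_and_reachable.mpr ⟨hxy,
        (SimpleGraph.Walk.cons a1 (SimpleGraph.Walk.cons a2 (SimpleGraph.Walk.cons a3 SimpleGraph.Walk.nil))).reachable⟩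
    have hd2 : (clean2Graph R).dist x y ≠ 2 := by
      intro hd
      obtain ⟨p, hlen⟩ := SimpleGraph.exists_walk_of_dist_ne_zero hd0
      rw [hd] at hlen
      cases p with
      | nil => simp at hlen
      | cons ha q =>
        rename_i b
        cases q with
        | nil => simp at hlen
        | cons hb q' =>
          rename_i c
          simp [SimpleGraph.Walk.length_cons] at hlen
          rw [hlen.eq] at hb
          have hub : Uu x = Uu b := by
            rcases ((adj_iff hU).mp ha).2 with h' | h'
            · rw [h2.1, one_mul] at h'; exact absurd h' (Ee_ne_zero b)
            · exact h'
          have huy : Uu b = Uu y := by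
            rcases ((adj_iff hU).mp hb).2 with h' | h'
            · rw [h2.2, mul_one] at h'; exact absurd h' (Ee_ne_zero b)
            · exact h'
          exact hu (hub.trans huy)
    have hne : (1 : R) ≠ 0 := fun h => hg0 (by rw [← mul_one g, h, mul_zero])
    rw [Dd_eq_three hne hu h2.1 h2.2]
    omega
  · -- distance 2
    have key : ∃ w : clean2Set R, (clean2Graph R).Adj x w ∧ (clean2Graph R).Adj w y := by
      by_cases hy1 : Ee y = 1
      · have hx1 : Ee x ≠ 1 := fun h => h2 ⟨h, hy1⟩
        refine ⟨vmk (1 - Ee x) (Ee_idem x).one_sub (one_sub_ne_zero hx1) (Uu y), ?_, ?_⟩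
        · refine (adj_iff hU).mpr ⟨ne_of_unit_ne (by simpa using hu), Or.inl ?_⟩
          simp only [Ee_vmk]
          rw [mul_sub, mul_one, Ee_idem x, sub_self]
        · refine (adj_iff hU).mpr ⟨fun h => ?_, Or.inr rfl⟩
          have := (vext_iff.mp h).1
          rw [Ee_vmk, hy1] at this
          exact Ee_ne_zero x (by linear_combination -this)
      · refine ⟨vmk (1 - Ee y) (Ee_idem y).one_sub (one_sub_ne_zero hy1) (Uu x), ?_, ?_⟩
        · refine (adj_iff hU).mpr ⟨fun h => ?_, Or.inr rfl⟩
          have := (vext_iff.mp h).1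
          rw [Ee_vmk] at this
          exact hp (by rw [this, sub_mul, one_mul, Ee_idem y, sub_self])
        · refine (adj_iff hU).mpr ⟨ne_of_unit_ne (by simpa using hu), Or.inl ?_⟩
          simp only [Ee_vmk]
          rw [sub_mul, one_mul, Ee_idem y, sub_self]
    obtain ⟨w, haw, hwb⟩ := key
    have hle : (clean2Graph R).dist x y ≤ 2 := by
      simpa using SimpleGraph.dist_le
        (SimpleGraph.Walk.cons haw (SimpleGraph.Walk.cons hwb SimpleGraph.Walk.nil))
    have hd0 : (clean2Graph R).dist x y ≠ 0 :=
      SimpleGraph.dist_ne_zero_iff_ne_and_reachable.mpr ⟨hxy,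
        (SimpleGraph.Walk.cons haw (SimpleGraph.Walk.cons hwb SimpleGraph.Walk.nil)).reachable⟩
    rw [Dd_eq_two hu hp h2]
    omega


lemma Dd_le_three {x y : clean2Set R} : Dd x y ≤ 3 := by
  unfold Dd; split_ifs <;> omega

lemma exists_unit_ne (hU : ∀ u : Rˣ, (u : R) * u = 1)
    (hnc : clean2Graph R ≠ ⊤) (u : Rˣ) : ∃ v : Rˣ, v ≠ u := by
  by_contra h
  push_neg at h
  apply hnc
  ext a b
  simp only [SimpleGraph.top_adj]
  constructor
  · exact fun hadj => hadj.ne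
  · intro hab
    exact (adj_iff hU).mpr ⟨hab, Or.inr ((h _).trans (h _).symm)⟩

lemma mmd_iff (hU : ∀ u : Rˣ, (u : R) * u = 1)
    (hid : ∃ e : R, IsIdempotentElem e ∧ e ≠ 0 ∧ e ≠ 1)
    (h2u : ∀ u : Rˣ, ∃ v : Rˣ, v ≠ u) {x y : clean2Set R} (hxy : x ≠ y) :
    IsMMD (clean2Graph R) x y ↔
      ((Ee x = 1 ∧ Ee y = 1) ∨
        (Ee x ≠ 1 ∧ Ee y ≠ 1 ∧ Ee x * Ee y ≠ 0 ∧ Uu x ≠ Uu y)) := by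
  obtain ⟨g, hg, hg0, hg1⟩ := hid
  have hne : (1 : R) ≠ 0 := fun h => hg0 (by rw [← mul_one g, h, mul_zero])
  have hid' : ∃ e : R, IsIdempotentElem e ∧ e ≠ 0 ∧ e ≠ 1 := ⟨g, hg, hg0, hg1⟩
  have hD := dist_eq (R := R) hU hid'
  constructor
  · intro hM
    by_cases hu : Uu x = Uu y
    · exfalso
      have hExy : Ee x ≠ Ee y := fun h => hxy (vext_iff.mpr ⟨h, hu⟩)
      have hdxy : (clean2Graph R).dist x y = 1 := by
        rw [hD]; exact Dd_eq_one hxy (Or.inl hu)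
      obtain ⟨v', hv'⟩ := h2u (Uu x)
      have hyv : Uu y ≠ v' := by rw [← hu]; exact fun h => hv' h.symm
      have hxv : Uu x ≠ v' := fun h => hv' h.symm
      by_cases hx1 : Ee x = 1
      · have hy1 : Ee y ≠ 1 := fun h => hExy (hx1.trans h.symm)
        have hwadj : (clean2Graph R).Adj y
            (vmk (1 - Ee y) (Ee_idem y).one_sub (one_sub_ne_zero hy1) v') := by
          refine (adj_iff hU).mpr ⟨ne_of_unit_ne (by simpa using hyv), Or.inl ?_⟩
          simp only [Ee_vmk]
          rw [mul_sub, mul_one, Ee_idem y, sub_self]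
        have h1 := hM.2 _ ((SimpleGraph.mem_neighborSet _ _ _).mpr hwadj)
        rw [show (clean2Graph R).dist y x = (clean2Graph R).dist x y from SimpleGraph.dist_comm, hdxy, hD] at h1
        rw [Dd_eq_two (by simpa using hxv)
          (by simp only [Ee_vmk]; rw [hx1, one_mul]; exact one_sub_ne_zero hy1)
          (fun hc => Ee_ne_zero y (by have := hc.2; simp only [Ee_vmk] at this
                                      linear_combination -this))] at h1
        omega
      · by_cases hy1 : Ee y = 1
        · have hwadj : (clean2Graph R).Adj x
              (vmk (1 - Ee x) (Ee_idem x).one_sub (one_sub_ne_zero hx1) v') := by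
            refine (adj_iff hU).mpr ⟨ne_of_unit_ne (by simpa using hxv), Or.inl ?_⟩
            simp only [Ee_vmk]
            rw [mul_sub, mul_one, Ee_idem x, sub_self]
          have h1 := hM.1 _ ((SimpleGraph.mem_neighborSet _ _ _).mpr hwadj)
          rw [hdxy, hD] at h1
          rw [Dd_eq_two (by simpa using hyv)
            (by simp only [Ee_vmk]; rw [hy1, one_mul]; exact one_sub_ne_zero hx1)
            (fun hc => Ee_ne_zero x (by have := hc.2
                                        simp only [Ee_vmk] at this
                                        linear_combination -this))] at h1
          omega
        · by_cases hE : Ee y * (1 - Ee x) = 0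
          · have hE2 : Ee x * (1 - Ee y) ≠ 0 := by
              intro h
              apply hExy
              have e1 : Ee y = Ee y * Ee x := by linear_combination hE
              have e2 : Ee x = Ee x * Ee y := by linear_combination h
              rw [e2, mul_comm, ← e1]
            have hwadj : (clean2Graph R).Adj y
                (vmk (1 - Ee y) (Ee_idem y).one_sub (one_sub_ne_zero hy1) v') := by
              refine (adj_iff hU).mpr ⟨ne_of_unit_ne (by simpa using hyv), Or.inl ?_⟩
              simp only [Ee_vmk]
              rw [mul_sub, mul_one, Ee_idem y, sub_self]
            have h1 := hM.2 _ ((SimpleGraph.mem_neighborSet _ _ _).mpr hwadj)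
            rw [show (clean2Graph R).dist y x = (clean2Graph R).dist x y from SimpleGraph.dist_comm, hdxy, hD] at h1
            rw [Dd_eq_two (by simpa using hxv) (by simpa using hE2)
              (fun hc => hx1 hc.1)] at h1
            omega
          · have hwadj : (clean2Graph R).Adj x
                (vmk (1 - Ee x) (Ee_idem x).one_sub (one_sub_ne_zero hx1) v') := by
              refine (adj_iff hU).mpr ⟨ne_of_unit_ne (by simpa using hxv), Or.inl ?_⟩
              simp only [Ee_vmk]
              rw [mul_sub, mul_one, Ee_idem x, sub_self]
            have h1 := hM.1 _ ((SimpleGraph.mem_neighborSet _ _ _).mpr hwadj)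
            rw [hdxy, hD] at h1
            rw [Dd_eq_two (by simpa using hyv) (by simpa using hE)
              (fun hc => hy1 hc.1)] at h1
            omega
    · by_cases hp : Ee x * Ee y = 0
      · exfalso
        have hExy : Ee x ≠ Ee y := by
          intro h
          rw [h, Ee_idem y] at hp
          exact Ee_ne_zero y hp
        have hy1 : Ee y ≠ 1 := by
          intro h; rw [h, mul_one] at hp; exact Ee_ne_zero x hp
        have hwadj : (clean2Graph R).Adj x
            (vmk (Ee y) (Ee_idem y) (Ee_ne_zero y) (Uu x)) := by
          refine (adj_iff hU).mpr ⟨fun h => hExy ?_, Or.inr rfl⟩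
          · have := (vext_iff.mp h).1; simpa using this
        have h1 := hM.1 _ ((SimpleGraph.mem_neighborSet _ _ _).mpr hwadj)
        have hdxy : (clean2Graph R).dist x y = 1 := by
          rw [hD]; exact Dd_eq_one hxy (Or.inr hp)
        rw [hdxy, hD] at h1
        rw [Dd_eq_two (by simpa using fun h => hu h.symm)
          (by simp only [Ee_vmk]; rw [Ee_idem y]; exact Ee_ne_zero y)
          (fun hc => hy1 hc.1)] at h1
        omega
      · by_cases hb : Ee x = 1 ∧ Ee y = 1
        · exact Or.inl hb
        · have hdxy : (clean2Graph R).dist x y = 2 := by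
            rw [hD]; exact Dd_eq_two hu hp hb
          by_cases hx1 : Ee x = 1
          · exfalso
            have hy1 : Ee y ≠ 1 := fun h => hb ⟨hx1, h⟩
            have hwadj : (clean2Graph R).Adj y
                (vmk 1 IsIdempotentElem.one hne (Uu y)) := by
              refine (adj_iff hU).mpr ⟨fun h => hy1 ?_, Or.inr rfl⟩
              have := (vext_iff.mp h).1; simpa using this
            have h1 := hM.2 _ ((SimpleGraph.mem_neighborSet _ _ _).mpr hwadj)
            rw [show (clean2Graph R).dist y x = (clean2Graph R).dist x y from SimpleGraph.dist_comm, hdxy, hD] at h1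
            rw [Dd_eq_three hne (by simpa using hu) hx1 (by simp)] at h1
            omega
          · by_cases hy1 : Ee y = 1
            · exfalso
              have hwadj : (clean2Graph R).Adj x
                  (vmk 1 IsIdempotentElem.one hne (Uu x)) := by
                refine (adj_iff hU).mpr ⟨fun h => hx1 ?_, Or.inr rfl⟩
                have := (vext_iff.mp h).1; simpa using this
              have h1 := hM.1 _ ((SimpleGraph.mem_neighborSet _ _ _).mpr hwadj)
              rw [hdxy, hD] at h1
              rw [Dd_eq_three hne (by simpa using fun h => hu h.symm) hy1
                (by simp)] at h1
              omega
            · exact Or.inr ⟨hx1, hy1, hp, hu⟩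
  · rintro (⟨hx1, hy1⟩ | ⟨hx1, hy1, hp, hu⟩)
    · have hu : Uu x ≠ Uu y := fun h => hxy (vext_iff.mpr ⟨hx1.trans hy1.symm, h⟩)
      have hd3 : (clean2Graph R).dist x y = 3 := by
        rw [hD]; exact Dd_eq_three hne hu hx1 hy1
      constructor
      · intro w _
        rw [hd3, hD]; exact Dd_le_three
      · intro w _
        rw [show (clean2Graph R).dist y x = (clean2Graph R).dist x y from SimpleGraph.dist_comm, hd3, hD]
        exact Dd_le_three
    · have hd2 : (clean2Graph R).dist x y = 2 := by
        rw [hD]; exact Dd_eq_two hu hp (fun h => hx1 h.1)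
      constructor
      · intro w _
        rw [hd2, hD]; exact Dd_le_two_left hy1
      · intro w _
        rw [show (clean2Graph R).dist y x = (clean2Graph R).dist x y from SimpleGraph.dist_comm, hd2, hD]
        exact Dd_le_two_left hx1

end Cl2Aux

open Cl2Aux in
theorem statement_3 (R : Type*) [CommRing R]
    (hid : ∃ e : R, IsIdempotentElem e ∧ e ≠ 0 ∧ e ≠ 1)
    (hU'' : uSecond R = ∅)
    (hnc : clean2Graph R ≠ ⊤) :
    (∀ x : clean2Set R, x ∈ graphBoundary (clean2Graph R)) ∧
    (∀ x y : clean2Set R, x ≠ y →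
      ((srGraph (clean2Graph R)).Adj x y ↔
        ((x.1.1 : R) = 1 ∧ (y.1.1 : R) = 1) ∨
        ((x.1.1 : R) ≠ 1 ∧ (y.1.1 : R) ≠ 1 ∧ (x.1.1 : R) * (y.1.1 : R) ≠ 0 ∧
          (x.1.2 : R) * (y.1.2 : R) ≠ 1))) := by

  have hU : ∀ u : Rˣ, (u : R) * u = 1 := unit_sq hU''
  have h2u : ∀ u : Rˣ, ∃ v : Rˣ, v ≠ u := exists_unit_ne hU hnc
  obtain ⟨g, hg, hg0, hg1⟩ := hid
  have hne : (1 : R) ≠ 0 := fun h => hg0 (by rw [← mul_one g, h, mul_zero])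
  have hid' : ∃ e : R, IsIdempotentElem e ∧ e ≠ 0 ∧ e ≠ 1 := ⟨g, hg, hg0, hg1⟩
  constructor
  · intro x
    obtain ⟨v', hv'⟩ := h2u (Uu x)
    by_cases hx1 : Ee x = 1
    · refine ⟨vmk 1 IsIdempotentElem.one hne v', fun h => hv' ?_, ?_⟩
      · have := (vext_iff.mp h).2; simpa using this.symm
      · exact (mmd_iff hU hid' h2u (fun h => hv' (by simpa using ((vext_iff.mp h).2).symm))).mpr
          (Or.inl ⟨hx1, rfl⟩)
    · refine ⟨vmk (Ee x) (Ee_idem x) (Ee_ne_zero x) v', fun h => hv' ?_, ?_⟩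
      · have := (vext_iff.mp h).2; simpa using this.symm
      · refine (mmd_iff hU hid' h2u (fun h => hv' (by simpa using ((vext_iff.mp h).2).symm))).mpr
          (Or.inr ⟨hx1, by simpa using hx1, ?_, by simpa using fun h => hv' h.symm⟩)
        simp only [Ee_vmk]
        rw [Ee_idem x]; exact Ee_ne_zero x
  · intro x y hxy
    have hsr : (srGraph (clean2Graph R)).Adj x y ↔ x ≠ y ∧ IsMMD (clean2Graph R) x y := Iff.rfl
    have hmul : ((x.1.2 : R) * (y.1.2 : R) ≠ 1) ↔ Uu x ≠ Uu y := not_congr (unit_mul_eq_one hU)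
    rw [hsr, mmd_iff hU hid' h2u hxy]
    constructor
    · rintro ⟨-, h | ⟨h1, h2, h3, h4⟩⟩
      · exact Or.inl h
      · exact Or.inr ⟨h1, h2, h3, hmul.mpr h4⟩
    · rintro (h | ⟨h1, h2, h3, h4⟩)
      · exact ⟨hxy, Or.inl h⟩
      · exact ⟨hxy, Or.inr ⟨h1, h2, h3, hmul.mp h4⟩⟩
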